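/- Let G'' : A → B and G' : B → C be functors such that: G'' has a left adjoint, G'' reflects isomorphisms, A has coequalizers of reflexive pairs and G'' preserves them, and G' is monadic. Then the composite G' ∘ G'' is monadic. -/

import Mathlib

open CategoryTheory CategoryTheory.Limits

universe w₁ w₂ x₁ x₂


namespace CategoryTheory

namespace Monad

open Limits

noncomputable section

-- Hide the implementation details in this namespace.
namespace CTTInternal

variable {C : Type w₁} {D : Type w₂}
variable [Category.{x₁} C] [Category.{x₂} D]
variable {G : D ⥤ C} {F : C ⥤ D} (adj : F ⊣ G)

/-- The "main pair" for an algebra `(A, α)` is the pair of morphisms `(F α, ε_FA)`. It is always a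
reflexive pair, and will be used to construct the left adjoint to the comparison functor and show it
is an equivalence.
-/
instance main_pair_reflexive (A : adj.toMonad.Algebra) :
    IsReflexivePair (F.map A.a) (adj.counit.app (F.obj A.A)) := by
  apply IsReflexivePair.mk' (F.map (adj.unit.app _)) _ _
  · refine ((F.map_comp _ _).symm.trans ?_).trans (F.map_id _)
    exact congr_arg F.map A.unit
  · exact adj.left_triangle_components _

/-- The "main pair" for an algebra `(A, α)` is the pair of morphisms `(F α, ε_FA)`. It is always a
`G`-split pair, and will be used to construct the left adjoint to the comparison functor and show it
is an equivalence.
-/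
instance main_pair_G_split (A : adj.toMonad.Algebra) :
    G.IsSplitPair (F.map A.a)
      (adj.counit.app (F.obj A.A)) where
  splittable := ⟨_, _, ⟨beckSplitCoequalizer A⟩⟩

/-- The object function for the left adjoint to the comparison functor. -/
def comparisonLeftAdjointObj (A : adj.toMonad.Algebra)
    [HasCoequalizer (F.map A.a) (adj.counit.app _)] : D :=
  coequalizer (F.map A.a) (adj.counit.app _)

/-
The new unused variable linter in
https://github.com/leanprover/lean4/pull/5338
flags `{ f : F.obj A.A ⟶ B // _ }`.
-/
set_option linter.unusedVariables false in
/--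
We have a bijection of homsets which will be used to construct the left adjoint to the comparison
functor.
-/
@[simps!]
def comparisonLeftAdjointHomEquiv (A : adj.toMonad.Algebra) (B : D)
    [HasCoequalizer (F.map A.a) (adj.counit.app (F.obj A.A))] :
    (comparisonLeftAdjointObj adj A ⟶ B) ≃ (A ⟶ (comparison adj).obj B) :=
  calc
    (comparisonLeftAdjointObj adj A ⟶ B) ≃ { f : F.obj A.A ⟶ B // _ } :=
      Cofork.IsColimit.homIso (colimit.isColimit _) B
    _ ≃ { g : A.A ⟶ G.obj B // G.map (F.map g) ≫ G.map (adj.counit.app B) = A.a ≫ g } := by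
      refine (adj.homEquiv _ _).subtypeEquiv ?_
      intro f
      rw [← (adj.homEquiv _ _).injective.eq_iff, Adjunction.homEquiv_naturality_left,
        adj.homEquiv_unit, adj.homEquiv_unit]
      erw [G.map_comp]
      dsimp
      erw [adj.right_triangle_components_assoc]
      rw [← G.map_comp, F.map_comp, Category.assoc,
        adj.counit_naturality, adj.left_triangle_components_assoc]
      apply eq_comm
    _ ≃ (A ⟶ (comparison adj).obj B) :=
      { toFun := fun g =>
          { f := _
            h := g.prop }
        invFun := fun f => ⟨f.f, f.h⟩
        left_inv := fun g => by ext; rfl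
        right_inv := fun f => by ext; rfl }

/-- Construct the adjunction to the comparison functor.
-/
def leftAdjointComparison
    [∀ A : adj.toMonad.Algebra, HasCoequalizer (F.map A.a)
      (adj.counit.app (F.obj A.A))] :
    adj.toMonad.Algebra ⥤ D := by
  refine
    Adjunction.leftAdjointOfEquiv (G := comparison adj)
      (F_obj := fun A => comparisonLeftAdjointObj adj A) (fun A B => ?_) ?_
  · apply comparisonLeftAdjointHomEquiv
  · intro A B B' g h
    ext1
    -- Porting note: the goal was previously closed by the following, which succeeds until
    -- `Category.assoc`.
    -- dsimp [comparisonLeftAdjointHomEquiv]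
    -- rw [← adj.homEquiv_naturality_right, Category.assoc]
    change (adj.homEquiv _ _ (_ ≫ h ≫ g)) = adj.homEquiv _ _ (_ ≫ h) ≫ G.map g
    simp only [Adjunction.homEquiv_unit, Category.assoc]
    refine congrArg (adj.unit.app A.A ≫ ·) ?_
    exact (congrArg G.map (Category.assoc _ _ _).symm).trans (G.map_comp _ _)

/-- Provided we have the appropriate coequalizers, we have an adjunction to the comparison functor.
-/
@[simps! counit]
def comparisonAdjunction
    [∀ A : adj.toMonad.Algebra, HasCoequalizer (F.map A.a)
      (adj.counit.app (F.obj A.A))] :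
    leftAdjointComparison adj ⊣ comparison adj :=
  Adjunction.adjunctionOfEquivLeft _ _

variable {adj}

theorem comparisonAdjunction_unit_f_aux
    [∀ A : adj.toMonad.Algebra, HasCoequalizer (F.map A.a)
      (adj.counit.app (F.obj A.A))]
    (A : adj.toMonad.Algebra) :
    ((comparisonAdjunction adj).unit.app A).f =
      adj.homEquiv A.A _
        (coequalizer.π (F.map A.a) (adj.counit.app (F.obj A.A))) :=
  congr_arg (adj.homEquiv _ _) (Category.comp_id _)

/-- This is a cofork which is helpful for establishing monadicity: the morphism from the Beck
coequalizer to this cofork is the unit for the adjunction on the comparison functor.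
-/
@[simps! pt]
def unitCofork (A : adj.toMonad.Algebra)
    [HasCoequalizer (F.map A.a) (adj.counit.app (F.obj A.A))] :
    Cofork (G.map (F.map A.a)) (G.map (adj.counit.app (F.obj A.A))) :=
  Cofork.ofπ (G.map (coequalizer.π (F.map A.a) (adj.counit.app (F.obj A.A))))
    (by
      change _ = G.map _ ≫ _
      erw [← G.map_comp, coequalizer.condition, G.map_comp])

@[simp]
theorem unitCofork_π (A : adj.toMonad.Algebra)
    [HasCoequalizer (F.map A.a) (adj.counit.app (F.obj A.A))] :
    (unitCofork A).π = G.map (coequalizer.π (F.map A.a) (adj.counit.app (F.obj A.A))) :=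
  rfl

theorem comparisonAdjunction_unit_f
    [∀ A : adj.toMonad.Algebra, HasCoequalizer (F.map A.a)
      (adj.counit.app (F.obj A.A))]
    (A : adj.toMonad.Algebra) :
    ((comparisonAdjunction adj).unit.app A).f = (beckCoequalizer A).desc (unitCofork A) := by
  apply Limits.Cofork.IsColimit.hom_ext (beckCoequalizer A)
  erw [Cofork.IsColimit.π_desc]
  dsimp only [beckCofork_π, unitCofork_π]
  erw [comparisonAdjunction_unit_f_aux, ← adj.homEquiv_naturality_left A.a, coequalizer.condition,
    adj.homEquiv_naturality_right, adj.homEquiv_unit, Category.assoc]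
  apply adj.right_triangle_components_assoc

variable (adj)

/-- The cofork which describes the counit of the adjunction: the morphism from the coequalizer of
this pair to this morphism is the counit.
-/
@[simps!]
def counitCofork (B : D) :
    Cofork (F.map (G.map (adj.counit.app B)))
      (adj.counit.app (F.obj (G.obj B))) :=
  Cofork.ofπ (adj.counit.app B) (adj.counit_naturality _)

variable {adj} in
/-- The unit cofork is a colimit provided `G` preserves it. -/
def unitColimitOfPreservesCoequalizer (A : adj.toMonad.Algebra)
    [HasCoequalizer (F.map A.a) (adj.counit.app (F.obj A.A))]
    [PreservesColimit (parallelPair (F.map A.a) (adj.counit.app (F.obj A.A))) G] :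
    IsColimit (unitCofork (G := G) A) :=
  isColimitOfHasCoequalizerOfPreservesColimit G _ _

/-- The counit cofork is a colimit provided `G` reflects it. -/
def counitCoequalizerOfReflectsCoequalizer (B : D)
    [ReflectsColimit (parallelPair (F.map (G.map (adj.counit.app B)))
      (adj.counit.app (F.obj (G.obj B)))) G] :
    IsColimit (counitCofork (adj := adj) B) :=
  isColimitOfIsColimitCoforkMap G _ (beckCoequalizer ((comparison adj).obj B))

-- Porting note: Lean 3 didn't seem to need this
instance
    [∀ A : adj.toMonad.Algebra, HasCoequalizer (F.map A.a) (adj.counit.app (F.obj A.A))]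
    (B : D) : HasColimit (parallelPair
      (F.map (G.map (NatTrans.app adj.counit B)))
      (NatTrans.app adj.counit (F.obj (G.obj B)))) :=
  inferInstanceAs <| HasCoequalizer
    (F.map ((comparison adj).obj B).a)
    (adj.counit.app (F.obj ((comparison adj).obj B).A))

theorem comparisonAdjunction_counit_app
    [∀ A : adj.toMonad.Algebra, HasCoequalizer (F.map A.a) (adj.counit.app (F.obj A.A))] (B : D) :
    (comparisonAdjunction adj).counit.app B = colimit.desc _ (counitCofork adj B) := by
  apply coequalizer.hom_ext
  exact (Cofork.IsColimit.π_desc' (colimit.isColimit (parallelPair (F.map (G.map (adj.counit.app B))) (adj.counit.app (F.obj (G.obj B))))) ((adj.homEquiv _ B).symm (𝟙 _)) _).trans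
    ((colimit.ι_desc (counitCofork adj B) WalkingParallelPair.one).trans (by simp [Adjunction.homEquiv_counit]; rfl)).symm

end CTTInternal
section Assembly

variable {C : Type w₁} {D : Type w₂} [Category.{x₁} C] [Category.{x₂} D]
variable {G : D ⥤ C} {F : C ⥤ D}

open CTTInternal in
/-- A version of the crude/Beck monadicity theorem where coequalizer hypotheses
are only required for the "main pairs". -/
def cttMonadicRightAdjoint (adj : F ⊣ G) [G.ReflectsIsomorphisms]
    (hhas : ∀ A : adj.toMonad.Algebra,
      HasCoequalizer (F.map A.a) (adj.counit.app (F.obj A.A)))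
    (hpres : ∀ A : adj.toMonad.Algebra,
      PreservesColimit (parallelPair (F.map A.a) (adj.counit.app (F.obj A.A))) G) :
    MonadicRightAdjoint G where
  L := F
  adj := adj
  eqv := by
    have hhas' : ∀ A : adj.toMonad.Algebra,
        HasCoequalizer (F.map A.a) (adj.counit.app (F.obj A.A)) := hhas
    have : ∀ (X : Algebra adj.toMonad), IsIso ((comparisonAdjunction adj).unit.app X) := by
      intro X
      have := hpres X
      apply
        @isIso_of_reflects_iso _ _ _ _ _ _ _ (Monad.forget adj.toMonad) ?_ _
      · change IsIso ((comparisonAdjunction adj).unit.app X).f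
        rw [comparisonAdjunction_unit_f]
        exact (IsColimit.coconePointUniqueUpToIso (beckCoequalizer X)
          (unitColimitOfPreservesCoequalizer X)).isIso_hom
    have : ∀ (Y : D), IsIso ((comparisonAdjunction adj).counit.app Y) := by
      intro Y
      have : PreservesColimit (parallelPair (F.map (G.map (adj.counit.app Y)))
          (adj.counit.app (F.obj (G.obj Y)))) G := hpres ((Monad.comparison adj).obj Y)
      rw [comparisonAdjunction_counit_app]
      change IsIso (IsColimit.coconePointUniqueUpToIso _ ?_).hom
      infer_instance
      apply @counitCoequalizerOfReflectsCoequalizer _ _ _ _ _ _ _ _ ?_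
      apply reflectsColimit_of_reflectsIsomorphisms
    exact (comparisonAdjunction adj).toEquivalence.isEquivalence_inverse

end Assembly

end

end Monad

open Limits

open Monad in
/-- If a reflexive pair is `(G'' ⋙ G')`-split, `G''` preserves its coequalizer and `G'` is
monadic, then the composite preserves its coequalizer. -/
noncomputable def presCompOfSplit {A : Type*} {B : Type*} {C : Type*}
    [Category A] [Category B] [Category C]
    (G'' : A ⥤ B) (G' : B ⥤ C) [MonadicRightAdjoint G']
    {X Y : A} (f g : X ⟶ Y)
    (h'' : PreservesColimit (parallelPair f g) G'')
    [hsp : (G'' ⋙ G').IsSplitPair f g] :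
    PreservesColimit (parallelPair f g) (G'' ⋙ G') := by
  have : HasSplitCoequalizer (G'.map (G''.map f)) (G'.map (G''.map g)) := hsp
  have : G'.IsSplitPair (G''.map f) (G''.map g) := this
  set L := monadicLeftAdjoint G' with hL
  set K := parallelPair (G''.map f) (G''.map g) with hK
  have hs1 : HasSplitCoequalizer ((K ⋙ G').map WalkingParallelPairHom.left)
      ((K ⋙ G').map WalkingParallelPairHom.right) :=
    (inferInstance : HasSplitCoequalizer (G'.map (G''.map f)) (G'.map (G''.map g)))
  have p0 : PreservesColimit (parallelPair ((K ⋙ G').map WalkingParallelPairHom.left)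
      ((K ⋙ G').map WalkingParallelPairHom.right)) (L ⋙ G') :=
    preservesSplitCoequalizers _ _ _
  haveI i1 : PreservesColimit (K ⋙ G') (L ⋙ G') :=
    preservesColimit_of_iso_diagram _ (diagramIsoParallelPair (K ⋙ G')).symm
  have hs2 : HasSplitCoequalizer (((K ⋙ G') ⋙ L ⋙ G').map WalkingParallelPairHom.left)
      (((K ⋙ G') ⋙ L ⋙ G').map WalkingParallelPairHom.right) :=
    map_is_split_pair (L ⋙ G') (G'.map (G''.map f)) (G'.map (G''.map g))
  have p2 : PreservesColimit (parallelPair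
      (((K ⋙ G') ⋙ L ⋙ G').map WalkingParallelPairHom.left)
      (((K ⋙ G') ⋙ L ⋙ G').map WalkingParallelPairHom.right)) (L ⋙ G') :=
    preservesSplitCoequalizers _ _ _
  haveI i2 : PreservesColimit ((K ⋙ G') ⋙ L ⋙ G') (L ⋙ G') :=
    preservesColimit_of_iso_diagram _ (diagramIsoParallelPair ((K ⋙ G') ⋙ L ⋙ G')).symm
  have hc : CreatesColimit K G' := monadicCreatesColimitOfPreservesColimit G' K
  have hcol0 : HasColimit (parallelPair ((K ⋙ G').map WalkingParallelPairHom.left)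
      ((K ⋙ G').map WalkingParallelPairHom.right)) :=
    Limits.hasCoequalizer_of_hasSplitCoequalizer _ _
  have hcol : HasColimit (K ⋙ G') :=
    Limits.hasColimit_of_iso (diagramIsoParallelPair (K ⋙ G'))
  have h' : PreservesColimit K G' :=
    preservesColimit_of_createsColimit_and_hasColimit _ _
  have h'x : PreservesColimit (parallelPair
      ((parallelPair f g ⋙ G'').map WalkingParallelPairHom.left)
      ((parallelPair f g ⋙ G'').map WalkingParallelPairHom.right)) G' := h'
  have h'c : PreservesColimit (parallelPair f g ⋙ G'') G' :=
    preservesColimit_of_iso_diagram G' (diagramIsoParallelPair _).symm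
  exact comp_preservesColimit G'' G'

end CategoryTheory

/-- The composite of a functor satisfying the Crude Tripleability Theorem
(left adjoint, reflects isomorphisms, domain has reflexive coequalizers and the
functor preserves them) followed by a monadic functor is monadic. -/
theorem comp_monadic_of_ctt {A B C : Type*} [Category A] [Category B] [Category C]
    (G'' : A ⥤ B) (G' : B ⥤ C)
    [G''.IsRightAdjoint] [G''.ReflectsIsomorphisms] [HasReflexiveCoequalizers A]
    (hpres : ∀ ⦃X Y : A⦄ (f g : X ⟶ Y), IsReflexivePair f g →
      Nonempty (PreservesColimit (parallelPair f g) G''))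
    [MonadicRightAdjoint G'] :
    Nonempty (MonadicRightAdjoint (G'' ⋙ G')) := by
  obtain ⟨F'', ⟨adj''⟩⟩ := ‹G''.IsRightAdjoint›
  let adj' := monadicAdjunction G'
  let adj : (monadicLeftAdjoint G' ⋙ F'') ⊣ (G'' ⋙ G') := adj'.comp adj''
  have hG' : G'.ReflectsIsomorphisms := by
    constructor
    intro X Y h hiso
    have : IsIso ((Monad.comparison (monadicAdjunction G') ⋙
        (monadicAdjunction G').toMonad.forget).map h) := by
      rw [NatIso.isIso_map_iff (Monad.comparisonForget (monadicAdjunction G')) h]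
      exact hiso
    exact isIso_of_reflects_iso h (Monad.comparison (monadicAdjunction G') ⋙
      (monadicAdjunction G').toMonad.forget)
  have : (G'' ⋙ G').ReflectsIsomorphisms := by
    constructor
    intro X Y h hiso
    have : IsIso (G'.map (G''.map h)) := hiso
    have : IsIso (G''.map h) := isIso_of_reflects_iso _ G'
    exact isIso_of_reflects_iso h G''
  refine ⟨Monad.cttMonadicRightAdjoint adj ?_ ?_⟩
  · intro Alg
    have := Monad.CTTInternal.main_pair_reflexive adj Alg
    exact HasReflexiveCoequalizers.has_coeq _ _
  · intro Alg
    have := Monad.CTTInternal.main_pair_reflexive adj Alg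
    have := Monad.CTTInternal.main_pair_G_split adj Alg
    exact presCompOfSplit G'' G' _ _ (hpres _ _ inferInstance).some
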